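/- Let Λ ∈ M_n^d (downward closed of cardinality n), let u ∈ L²(Γ, dρ), and let w_n be the discrete least-squares minimizer over the optimized set Λ_m^opt. Then for any v ∈ P_Λ, one has ‖u − w_n‖ ≤ ‖u − v‖ + 2 √(C_{2n−1}^d) ‖u − v‖_m, where C_{2n−1}^d := max over downward closed Λ' of cardinality 2n−1 of max_{w ∈ P_{Λ'}} ‖w‖²/‖w‖_m². -/

import Mathlib

open MeasureTheory

def DownwardClosed {d : ℕ} (Λ : Finset (Fin d → ℕ)) : Prop :=
  ∀ ν ∈ Λ, ∀ μ : Fin d → ℕ, μ ≤ ν → μ ∈ Λ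

/-- The polynomial space `P_Λ = span{y ↦ y^ν : ν ∈ Λ}`. -/
noncomputable def polySpace {d : ℕ} (Λ : Finset (Fin d → ℕ)) :
    Submodule ℝ ((Fin d → ℝ) → ℝ) :=
  Submodule.span ℝ {f | ∃ ν ∈ Λ, f = fun y => ∏ j, y j ^ ν j}

/-- The `L²(Γ,dρ)` norm `‖f‖ = (∫ f² dρ)^{1/2}`. -/
noncomputable def L2norm {d : ℕ} (ρ : Measure (Fin d → ℝ)) (f : (Fin d → ℝ) → ℝ) : ℝ :=
  Real.sqrt (∫ y, f y ^ 2 ∂ρ)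

/-- The empirical (semi)norm `‖f‖_m = ((1/m) ∑ᵢ f(yⁱ)²)^{1/2}`. -/
noncomputable def empNorm {d m : ℕ} (y : Fin m → (Fin d → ℝ)) (f : (Fin d → ℝ) → ℝ) : ℝ :=
  Real.sqrt ((∑ i, f (y i) ^ 2) / m)

lemma polySpace_memℒp {d : ℕ} {ρ : Measure (Fin d → ℝ)} [IsProbabilityMeasure ρ]
    (hsupp : ∀ᵐ z ∂ρ, ∀ j, |z j| ≤ 1)
    {Λ : Finset (Fin d → ℕ)} {p : (Fin d → ℝ) → ℝ} (hp : p ∈ polySpace Λ) :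
    MemLp p 2 ρ := by
  refine Submodule.span_induction ?_ ?_ ?_ ?_ hp
  · rintro f ⟨ν, -, rfl⟩
    refine MemLp.of_bound ?_ 1 ?_
    · exact (continuous_finset_prod _ (fun j _ =>
        (continuous_apply j).pow (ν j))).aestronglyMeasurable
    · filter_upwards [hsupp] with z hz
      rw [Real.norm_eq_abs, Finset.abs_prod]
      refine Finset.prod_le_one (fun j _ => abs_nonneg _) (fun j _ => ?_)
      rw [abs_pow]
      exact pow_le_one₀ (abs_nonneg _) (hz j)
  · exact MemLp.zero
  · exact fun f g _ _ hf hg => hf.add hg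
  · exact fun c f _ hf => hf.const_smul c

lemma L2norm_eq {d : ℕ} {ρ : Measure (Fin d → ℝ)} {f : (Fin d → ℝ) → ℝ}
    (hf : MemLp f 2 ρ) : L2norm ρ f = (eLpNorm f 2 ρ).toReal := by
  rw [hf.eLpNorm_eq_integral_rpow_norm two_ne_zero ENNReal.ofNat_ne_top]
  rw [ENNReal.toReal_ofReal (by positivity)]
  simp only [ENNReal.toReal_ofNat]
  rw [L2norm]
  have h1 : (∫ a, ‖f a‖ ^ (2:ℝ) ∂ρ) = ∫ y, f y ^ 2 ∂ρ := by
    congr 1; funext a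
    rw [Real.rpow_two, Real.norm_eq_abs, sq_abs]
  rw [h1, Real.sqrt_eq_rpow]
  norm_num

lemma L2norm_triangle {d : ℕ} {ρ : Measure (Fin d → ℝ)} {f g : (Fin d → ℝ) → ℝ}
    (hf : MemLp f 2 ρ) (hg : MemLp g 2 ρ) :
    L2norm ρ (f + g) ≤ L2norm ρ f + L2norm ρ g := by
  rw [L2norm_eq (hf.add hg), L2norm_eq hf, L2norm_eq hg]
  rw [← ENNReal.toReal_add hf.2.ne hg.2.ne]
  exact ENNReal.toReal_mono (by simp [hf.2.ne, hg.2.ne])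
    (eLpNorm_add_le hf.1 hg.1 one_le_two)

lemma empNorm_eq {d m : ℕ} (y : Fin m → (Fin d → ℝ)) (f : (Fin d → ℝ) → ℝ) :
    empNorm y f = ‖(WithLp.equiv 2 (Fin m → ℝ)).symm (fun i => f (y i))‖ / Real.sqrt m := by
  rw [EuclideanSpace.norm_eq, empNorm, Real.sqrt_div (by positivity)]
  congr 2
  exact Finset.sum_congr rfl fun i _ => by
    rw [WithLp.equiv_symm_apply, PiLp.toLp_apply, Real.norm_eq_abs, sq_abs]

lemma empNorm_triangle {d m : ℕ} (hm : 0 < m) (y : Fin m → (Fin d → ℝ))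
    (f g : (Fin d → ℝ) → ℝ) :
    empNorm y (f + g) ≤ empNorm y f + empNorm y g := by
  rw [empNorm_eq, empNorm_eq, empNorm_eq, ← add_div]
  have hsm : (0:ℝ) < Real.sqrt m := Real.sqrt_pos.mpr (by exact_mod_cast hm)
  gcongr
  have : ((WithLp.equiv 2 (Fin m → ℝ)).symm (fun i => (f + g) (y i)))
      = (WithLp.equiv 2 (Fin m → ℝ)).symm (fun i => f (y i))
        + (WithLp.equiv 2 (Fin m → ℝ)).symm (fun i => g (y i)) := by
    rfl
  rw [this]
  exact norm_add_le _ _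


lemma downward_insert_step {d : ℕ} (hd : 1 ≤ d) (S : Finset (Fin d → ℕ))
    (hS : DownwardClosed S) :
    ∃ ν ∉ S, DownwardClosed (insert ν S) := by
  set i0 : Fin d := ⟨0, hd⟩ with hi0
  set e : ℕ → (Fin d → ℕ) := fun t j => if j = i0 then t else 0 with he
  have hinj : Function.Injective e := by
    intro a b hab
    have := congrFun hab i0
    simpa [he] using this
  have hex : ∃ t, e t ∉ S := by
    by_contra h
    push_neg at h
    exact (Set.infinite_of_injective_forall_mem hinj h) S.finite_toSet
  classical
  let t0 := Nat.find hex
  refine ⟨e t0, Nat.find_spec hex, ?_⟩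
  intro ν hν μ hμ
  rcases Finset.mem_insert.mp hν with hν | hν
  · -- ν = e t0
    subst hν
    have hμ0 : ∀ j, j ≠ i0 → μ j = 0 := by
      intro j hj
      have := hμ j
      simpa [he, hj] using this
    have hμe : μ = e (μ i0) := by
      funext j
      by_cases hj : j = i0
      · subst hj; simp [he]
      · simp [he, hj, hμ0 j hj]
    by_cases hlt : μ i0 < t0
    · have := Nat.find_min hex hlt
      push_neg at this
      exact Finset.mem_insert_of_mem (hμe ▸ this)
    · have hle : μ i0 ≤ t0 := by
        have := hμ i0
        simpa [he] using this
      have : μ i0 = t0 := le_antisymm hle (not_lt.mp hlt)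
      rw [hμe, this]
      exact Finset.mem_insert_self _ _
  · exact Finset.mem_insert_of_mem (hS ν hν μ hμ)

lemma downward_extend {d : ℕ} (hd : 1 ≤ d) :
    ∀ (k N : ℕ) (S : Finset (Fin d → ℕ)), DownwardClosed S → S.card ≤ N →
      N - S.card = k → ∃ T, DownwardClosed T ∧ S ⊆ T ∧ T.card = N := by
  intro k
  induction k with
  | zero =>
    intro N S hS hle h0
    exact ⟨S, hS, Finset.Subset.refl S, by omega⟩
  | succ k ih =>
    intro N S hS hle hk
    obtain ⟨ν, hν, hdc⟩ := downward_insert_step hd S hS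
    obtain ⟨T, hT, hsub, hcard⟩ := ih N (insert ν S) hdc
      (by rw [Finset.card_insert_of_notMem hν]; omega)
      (by rw [Finset.card_insert_of_notMem hν]; omega)
    exact ⟨T, hT, (Finset.subset_insert _ _).trans hsub, hcard⟩

lemma empNorm_neg {d m : ℕ} (y : Fin m → (Fin d → ℝ)) (f : (Fin d → ℝ) → ℝ) :
    empNorm y (-f) = empNorm y f := by
  unfold empNorm
  congr 2
  exact Finset.sum_congr rfl fun i _ => by simp [neg_sq]

lemma polySpace_mono {d : ℕ} {Λ Λ' : Finset (Fin d → ℕ)} (h : Λ ⊆ Λ') :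
    polySpace Λ ≤ polySpace Λ' := by
  apply Submodule.span_mono
  rintro f ⟨ν, hν, rfl⟩
  exact ⟨ν, h hν, rfl⟩


/-- Comparison lemma: if `w` is the discrete least-squares minimizer over the
sample-optimized downward closed set of cardinality `n`, then for any downward closed
`Λ` of cardinality `n` and any `v ∈ P_Λ`,
`‖u − w‖ ≤ ‖u − v‖ + 2 √(C_{2n−1}^d) ‖u − v‖_m`. -/
theorem optimized_ls_comparison (d n m : ℕ) (hd : 1 ≤ d) (hn : 1 ≤ n) (hm : 1 ≤ m)
    (ρ : Measure (Fin d → ℝ)) [IsProbabilityMeasure ρ]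
    (hsupp : ∀ᵐ z ∂ρ, ∀ j, |z j| ≤ 1)
    (u : (Fin d → ℝ) → ℝ) (hu : MemLp u 2 ρ)
    (y : Fin m → (Fin d → ℝ))
    (C : ℝ) (hC0 : 0 ≤ C)
    (hC : ∀ Λ' : Finset (Fin d → ℕ), DownwardClosed Λ' → Λ'.card = 2 * n - 1 →
      ∀ p ∈ polySpace Λ', (L2norm ρ p) ^ 2 ≤ C * (empNorm y p) ^ 2)
    (Λopt : Finset (Fin d → ℕ)) (hΛopt : DownwardClosed Λopt) (hcopt : Λopt.card = n)
    (w : (Fin d → ℝ) → ℝ) (hw : w ∈ polySpace Λopt)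
    (hwmin : ∀ Λ' : Finset (Fin d → ℕ), DownwardClosed Λ' → Λ'.card = n →
      ∀ v' ∈ polySpace Λ', empNorm y (u - w) ≤ empNorm y (u - v'))
    (Λ : Finset (Fin d → ℕ)) (hΛ : DownwardClosed Λ) (hc : Λ.card = n)
    (v : (Fin d → ℝ) → ℝ) (hv : v ∈ polySpace Λ) :
    L2norm ρ (u - w) ≤ L2norm ρ (u - v) + 2 * Real.sqrt C * empNorm y (u - v) := by
  classical
  have hmv : MemLp v 2 ρ := polySpace_memℒp hsupp hv
  have hmw : MemLp w 2 ρ := polySpace_memℒp hsupp hw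
  -- 0 belongs to both sets
  have hzero : ∀ (S : Finset (Fin d → ℕ)), DownwardClosed S → S.card = n →
      (0 : Fin d → ℕ) ∈ S := by
    intro S hS hSc
    have : S.Nonempty := Finset.card_pos.mp (by omega)
    obtain ⟨ν, hν⟩ := this
    exact hS ν hν 0 (fun j => Nat.zero_le _)
  -- the union
  set U := Λ ∪ Λopt with hUdef
  have hU : DownwardClosed U := by
    intro ν hν μ hμ
    rcases Finset.mem_union.mp hν with h | h
    · exact Finset.mem_union_left _ (hΛ ν h μ hμ)
    · exact Finset.mem_union_right _ (hΛopt ν h μ hμ)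
  have hUcard : U.card ≤ 2 * n - 1 := by
    have h1 : U.card + (Λ ∩ Λopt).card = Λ.card + Λopt.card :=
      Finset.card_union_add_card_inter Λ Λopt
    have h2 : (0 : Fin d → ℕ) ∈ Λ ∩ Λopt :=
      Finset.mem_inter.mpr ⟨hzero Λ hΛ hc, hzero Λopt hΛopt hcopt⟩
    have h3 : 1 ≤ (Λ ∩ Λopt).card := Finset.card_pos.mpr ⟨0, h2⟩
    omega
  obtain ⟨T, hT, hsubU, hcardT⟩ :=
    downward_extend hd (2 * n - 1 - U.card) (2 * n - 1) U hU hUcard rfl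
  have hvwT : v - w ∈ polySpace T := by
    have hvT : v ∈ polySpace T :=
      polySpace_mono ((Finset.subset_union_left).trans hsubU) hv
    have hwT : w ∈ polySpace T :=
      polySpace_mono ((Finset.subset_union_right).trans hsubU) hw
    exact sub_mem hvT hwT
  have key := hC T hT hcardT (v - w) hvwT
  -- L2norm (v - w) ≤ √C * empNorm (v - w)
  have h4 : L2norm ρ (v - w) ≤ Real.sqrt C * empNorm y (v - w) := by
    have ha : 0 ≤ L2norm ρ (v - w) := Real.sqrt_nonneg _
    have hb : 0 ≤ empNorm y (v - w) := Real.sqrt_nonneg _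
    nlinarith [Real.sq_sqrt hC0, Real.sqrt_nonneg C,
      mul_nonneg (Real.sqrt_nonneg C) hb]
  -- empNorm (v - w) ≤ 2 * empNorm (u - v)
  have h5 : empNorm y (v - w) ≤ 2 * empNorm y (u - v) := by
    have heq : v - w = (u - w) + (-(u - v)) := by funext z; simp only [Pi.sub_apply, Pi.add_apply, Pi.neg_apply]; ring
    calc empNorm y (v - w) = empNorm y ((u - w) + (-(u - v))) := by rw [← heq]
      _ ≤ empNorm y (u - w) + empNorm y (-(u - v)) := empNorm_triangle hm y _ _
      _ = empNorm y (u - w) + empNorm y (u - v) := by rw [empNorm_neg]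
      _ ≤ empNorm y (u - v) + empNorm y (u - v) := by
          have := hwmin Λ hΛ hc v hv
          linarith
      _ = 2 * empNorm y (u - v) := by ring
  -- L2 triangle
  have h6 : L2norm ρ (u - w) ≤ L2norm ρ (u - v) + L2norm ρ (v - w) := by
    have heq : u - w = (u - v) + (v - w) := by funext z; simp only [Pi.sub_apply, Pi.add_apply, Pi.neg_apply]; ring
    rw [heq]
    exact L2norm_triangle (hu.sub hmv) (hmv.sub hmw)
  have hsC : 0 ≤ Real.sqrt C := Real.sqrt_nonneg C
  calc L2norm ρ (u - w) ≤ L2norm ρ (u - v) + L2norm ρ (v - w) := h6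
    _ ≤ L2norm ρ (u - v) + Real.sqrt C * empNorm y (v - w) := by linarith
    _ ≤ L2norm ρ (u - v) + Real.sqrt C * (2 * empNorm y (u - v)) := by
        have := mul_le_mul_of_nonneg_left h5 hsC
        linarith
    _ = L2norm ρ (u - v) + 2 * Real.sqrt C * empNorm y (u - v) := by ring
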